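/- For every q in the open interval (1, 2), the function f(z) = (1 - z^q)(1 - z^{2-q}) / (z^{2-q}(1 - z^{q-1})^2) is monotone decreasing on the open interval (0, 1): for all z₁, z₂ with 0 < z₁ < z₂ < 1, one has f(z₂) ≤ f(z₁). -/

import Mathlib

open Real Set

/-- `sinh t ≤ t * cosh t` for `t ≥ 0`. -/
lemma aux_sinh_le_mul_cosh {t : ℝ} (ht : 0 ≤ t) : Real.sinh t ≤ t * Real.cosh t := by
  have key : MonotoneOn (fun s : ℝ => s * Real.cosh s - Real.sinh s) (Set.Ici 0) := by
    apply monotoneOn_of_deriv_nonneg (convex_Ici 0)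
    · fun_prop
    · apply Differentiable.differentiableOn
      fun_prop
    · intro x hx
      rw [interior_Ici, Set.mem_Ioi] at hx
      have h : HasDerivAt (fun s : ℝ => s * Real.cosh s - Real.sinh s) (x * Real.sinh x) x := by
        have := ((hasDerivAt_id x).mul (Real.hasDerivAt_cosh x)).sub (Real.hasDerivAt_sinh x)
        exact this.congr_deriv (by simp only [id_eq]; ring)
      rw [h.deriv]
      exact mul_nonneg hx.le (Real.sinh_nonneg_iff.mpr hx.le)
  have h0 : (0:ℝ) ∈ Set.Ici (0:ℝ) := Set.self_mem_Ici
  have := key h0 (Set.mem_Ici.mpr ht) ht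
  simpa using this

/-- `sinh u / u` is monotone: `v * sinh u ≤ u * sinh v` for `0 ≤ u ≤ v`. -/
lemma aux_sinh_div_mono {u v : ℝ} (hu : 0 ≤ u) (huv : u ≤ v) :
    v * Real.sinh u ≤ u * Real.sinh v := by
  rcases eq_or_lt_of_le hu with h | hu'
  · simp [← h]
  have key : MonotoneOn (fun s : ℝ => u * Real.sinh s - s * Real.sinh u) (Set.Ici u) := by
    apply monotoneOn_of_deriv_nonneg (convex_Ici u)
    · fun_prop
    · apply Differentiable.differentiableOn
      fun_prop
    · intro x hx
      rw [interior_Ici, Set.mem_Ioi] at hx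
      have h : HasDerivAt (fun s : ℝ => u * Real.sinh s - s * Real.sinh u)
          (u * Real.cosh x - Real.sinh u) x := by
        have := ((Real.hasDerivAt_sinh x).const_mul u).sub
          ((hasDerivAt_id x).mul_const (Real.sinh u))
        exact this.congr_deriv (by ring)
      rw [h.deriv, sub_nonneg]
      calc Real.sinh u ≤ u * Real.cosh u := aux_sinh_le_mul_cosh hu
        _ ≤ u * Real.cosh x := by
            apply mul_le_mul_of_nonneg_left _ hu
            have : Real.cosh u ≤ Real.cosh x := by
              rcases eq_or_lt_of_le (le_of_lt hx) with h' | h'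
              · simp [h']
              · exact (Real.cosh_lt_cosh.mpr (by
                  rw [abs_of_nonneg hu, abs_of_nonneg (hu.trans hx.le)]; exact h')).le
            exact this
  have := key (Set.self_mem_Ici) (Set.mem_Ici.mpr huv) huv
  simp only [sub_self] at this
  linarith [this]

/-- Core: for `0 < b ≤ a` and `0 < x ≤ y`, `sinh(ax) sinh(by) ≤ sinh(ay) sinh(bx)`. -/
lemma aux_core {a b x y : ℝ} (hb : 0 < b) (hba : b ≤ a) (hx : 0 < x) (hxy : x ≤ y) :
    Real.sinh (a * x) * Real.sinh (b * y) ≤ Real.sinh (a * y) * Real.sinh (b * x) := by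
  -- monotonicity of t ↦ sinh (a t) / sinh (b t) on (0, ∞)
  have ha : 0 < a := lt_of_lt_of_le hb hba
  have hmono : MonotoneOn (fun t : ℝ => Real.sinh (a * t) / Real.sinh (b * t)) (Set.Ioi 0) := by
    apply monotoneOn_of_deriv_nonneg (convex_Ioi 0)
    · apply ContinuousOn.div (by fun_prop) (by fun_prop)
      intro t ht
      exact ne_of_gt (Real.sinh_pos_iff.mpr (mul_pos hb ht))
    · rw [interior_Ioi]
      intro t ht
      have hbt : Real.sinh (b * t) ≠ 0 := ne_of_gt (Real.sinh_pos_iff.mpr (mul_pos hb ht))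
      have h1 : HasDerivAt (fun t : ℝ => Real.sinh (a * t)) (Real.cosh (a * t) * a) t :=
        (Real.hasDerivAt_sinh (a * t)).comp t (by simpa using (hasDerivAt_id t).const_mul a)
      have h2 : HasDerivAt (fun t : ℝ => Real.sinh (b * t)) (Real.cosh (b * t) * b) t :=
        (Real.hasDerivAt_sinh (b * t)).comp t (by simpa using (hasDerivAt_id t).const_mul b)
      exact ((h1.div h2 hbt).differentiableAt).differentiableWithinAt
    · rw [interior_Ioi]
      intro t ht
      rw [Set.mem_Ioi] at ht
      have hbt : Real.sinh (b * t) ≠ 0 := ne_of_gt (Real.sinh_pos_iff.mpr (mul_pos hb ht))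
      have h1 : HasDerivAt (fun t : ℝ => Real.sinh (a * t)) (Real.cosh (a * t) * a) t :=
        (Real.hasDerivAt_sinh (a * t)).comp t (by simpa using (hasDerivAt_id t).const_mul a)
      have h2 : HasDerivAt (fun t : ℝ => Real.sinh (b * t)) (Real.cosh (b * t) * b) t :=
        (Real.hasDerivAt_sinh (b * t)).comp t (by simpa using (hasDerivAt_id t).const_mul b)
      have hd : HasDerivAt (fun t : ℝ => Real.sinh (a * t) / Real.sinh (b * t)) _ t := h1.div h2 hbt
      rw [hd.deriv]
      apply div_nonneg _ (sq_nonneg _)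
      rw [sub_nonneg]
      -- need : cosh(bt) * b * sinh(at) ≤ cosh(at) * a * sinh(bt)
      have key := aux_sinh_div_mono (u := (a - b) * t) (v := (a + b) * t)
        (mul_nonneg (sub_nonneg.mpr hba) ht.le)
        (by nlinarith)
      have e1 : (a + b) * t = a * t + b * t := by ring
      have e2 : (a - b) * t = a * t - b * t := by ring
      rw [e1, e2, Real.sinh_add, Real.sinh_sub] at key
      -- key : (a+b)t * (S C' - C S') ≤ (a-b)t * (S C' + C S')
      nlinarith [key, ht, mul_pos ht (Real.sinh_pos_iff.mpr (mul_pos hb ht))]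
  have hxm : x ∈ Set.Ioi (0:ℝ) := hx
  have hym : y ∈ Set.Ioi (0:ℝ) := lt_of_lt_of_le hx hxy
  have hdiv := hmono hxm hym hxy
  have hsx : 0 < Real.sinh (b * x) := Real.sinh_pos_iff.mpr (mul_pos hb hx)
  have hsy : 0 < Real.sinh (b * y) := Real.sinh_pos_iff.mpr (mul_pos hb (lt_of_lt_of_le hx hxy))
  rw [div_le_div_iff₀ hsx hsy] at hdiv
  linarith

/-- `cosh x - 1 = 2 * sinh (x/2) ^ 2`. -/
lemma aux_cosh_sub_one (x : ℝ) : Real.cosh x - 1 = 2 * Real.sinh (x / 2) ^ 2 := by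
  have h1 : Real.cosh x = Real.cosh (2 * (x / 2)) := by congr 1; ring
  rw [h1, Real.cosh_two_mul, Real.cosh_sq]
  ring

/-- Monotonicity in `t` of `(cosh t - cosh (c t)) / (cosh (c t) - 1)` for `c ∈ (0,1)`. -/
lemma aux_cosh_mono {c t₁ t₂ : ℝ} (hc0 : 0 < c) (hc1 : c < 1) (ht2 : 0 < t₂) (h12 : t₂ ≤ t₁) :
    (Real.cosh t₂ - Real.cosh (c * t₂)) / (Real.cosh (c * t₂) - 1) ≤
      (Real.cosh t₁ - Real.cosh (c * t₁)) / (Real.cosh (c * t₁) - 1) := by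
  have ht1 : 0 < t₁ := lt_of_lt_of_le ht2 h12
  have hd2 : 0 < Real.cosh (c * t₂) - 1 := by
    rw [sub_pos]; exact Real.one_lt_cosh.mpr (ne_of_gt (mul_pos hc0 ht2))
  have hd1 : 0 < Real.cosh (c * t₁) - 1 := by
    rw [sub_pos]; exact Real.one_lt_cosh.mpr (ne_of_gt (mul_pos hc0 ht1))
  rw [div_le_div_iff₀ hd2 hd1]
  -- core inequality
  have hcore := aux_core (a := 1) (b := c) (x := t₂ / 2) (y := t₁ / 2) hc0 hc1.le
    (by linarith) (by linarith)
  have hs1 : 0 ≤ Real.sinh (1 * (t₂ / 2)) := Real.sinh_nonneg_iff.mpr (by linarith)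
  have hs2 : 0 ≤ Real.sinh (c * (t₂ / 2)) := Real.sinh_nonneg_iff.mpr (by positivity)
  have hsq : Real.sinh (1 * (t₂ / 2)) ^ 2 * Real.sinh (c * (t₁ / 2)) ^ 2 ≤
      Real.sinh (1 * (t₁ / 2)) ^ 2 * Real.sinh (c * (t₂ / 2)) ^ 2 := by
    have hl : 0 ≤ Real.sinh (1 * (t₂ / 2)) * Real.sinh (c * (t₁ / 2)) :=
      mul_nonneg hs1 (Real.sinh_nonneg_iff.mpr (by positivity))
    nlinarith [hcore, hl]
  have e1 : Real.cosh t₁ - 1 = 2 * Real.sinh (1 * (t₁ / 2)) ^ 2 := by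
    rw [one_mul]; exact aux_cosh_sub_one t₁
  have e2 : Real.cosh t₂ - 1 = 2 * Real.sinh (1 * (t₂ / 2)) ^ 2 := by
    rw [one_mul]; exact aux_cosh_sub_one t₂
  have e3 : Real.cosh (c * t₁) - 1 = 2 * Real.sinh (c * (t₁ / 2)) ^ 2 := by
    rw [aux_cosh_sub_one, mul_div_assoc]
  have e4 : Real.cosh (c * t₂) - 1 = 2 * Real.sinh (c * (t₂ / 2)) ^ 2 := by
    rw [aux_cosh_sub_one, mul_div_assoc]
  nlinarith [hsq]

/-- Reduction: express `f(z)` in hyperbolic form with `t = -log z`. -/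
lemma aux_reduce {q z : ℝ} (hq1 : 1 < q) (hq2 : q < 2) (hz0 : 0 < z) (hz1 : z < 1) :
    (1 - z ^ q) * (1 - z ^ (2 - q)) / (z ^ (2 - q) * (1 - z ^ (q - 1)) ^ 2) =
      (Real.cosh (-Real.log z) - Real.cosh ((q - 1) * -Real.log z)) /
        (Real.cosh ((q - 1) * -Real.log z) - 1) := by
  set L := Real.log z with hLdef
  have hL : L < 0 := Real.log_neg hz0 hz1
  set B := Real.exp ((q - 1) * L) with hBdef
  have hB0 : 0 < B := Real.exp_pos _
  have hB1 : B < 1 := by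
    rw [hBdef, Real.exp_lt_one_iff]
    exact mul_neg_of_pos_of_neg (by linarith) hL
  have hzq : z ^ q = z * B := by
    rw [Real.rpow_def_of_pos hz0, hBdef, ← Real.exp_log hz0, ← Real.exp_add, Real.exp_log hz0]
    congr 1
    ring
  have hz2q : z ^ (2 - q) = z / B := by
    rw [Real.rpow_def_of_pos hz0, hBdef, div_eq_mul_inv, ← Real.exp_neg,
      ← Real.exp_log hz0, ← Real.exp_add, Real.exp_log hz0]
    congr 1
    ring
  have hzq1 : z ^ (q - 1) = B := by
    rw [Real.rpow_def_of_pos hz0, hBdef]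
    congr 1
    ring
  have hc1 : Real.cosh (-L) = (z⁻¹ + z) / 2 := by
    rw [Real.cosh_eq, neg_neg, Real.exp_neg, Real.exp_log hz0]
  have hc2 : Real.cosh ((q - 1) * -L) = (B⁻¹ + B) / 2 := by
    have : (q - 1) * -L = -((q - 1) * L) := by ring
    rw [this, Real.cosh_eq, neg_neg, Real.exp_neg, hBdef]
  rw [hzq, hz2q, hzq1, hc1, hc2]
  have hz : z ≠ 0 := ne_of_gt hz0
  have hBne : B ≠ 0 := ne_of_gt hB0
  have hB1ne : (1 : ℝ) - B ≠ 0 := by intro h; apply absurd hB1; rw [show B = 1 by linarith]; simp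
  have hden : (B⁻¹ + B) / 2 - 1 ≠ 0 := by
    have : (B⁻¹ + B) / 2 - 1 = (1 - B) ^ 2 / (2 * B) := by field_simp; ring
    rw [this]
    positivity
  have hDL : z / B * (1 - B) ^ 2 ≠ 0 :=
    mul_ne_zero (div_ne_zero hz hBne) (pow_ne_zero 2 hB1ne)
  rw [div_eq_div_iff hDL hden]
  field_simp
  ring

theorem stmt_15 (q : ℝ) (hq : q ∈ Set.Ioo (1 : ℝ) 2) (z₁ z₂ : ℝ)
    (h₁ : 0 < z₁) (h₁₂ : z₁ < z₂) (h₂ : z₂ < 1) :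
    (1 - z₂ ^ q) * (1 - z₂ ^ (2 - q)) / (z₂ ^ (2 - q) * (1 - z₂ ^ (q - 1)) ^ 2) ≤
      (1 - z₁ ^ q) * (1 - z₁ ^ (2 - q)) / (z₁ ^ (2 - q) * (1 - z₁ ^ (q - 1)) ^ 2) := by
  obtain ⟨hq1, hq2⟩ := hq
  have h₁' : z₁ < 1 := lt_trans h₁₂ h₂
  have h₂' : 0 < z₂ := lt_trans h₁ h₁₂
  rw [aux_reduce hq1 hq2 h₁ h₁', aux_reduce hq1 hq2 h₂' h₂]
  apply aux_cosh_mono (by linarith) (by linarith)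
  · rw [neg_pos]; exact Real.log_neg h₂' h₂
  · rw [neg_le_neg_iff]
    exact Real.log_le_log h₁ h₁₂.le
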